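/- (Key step of the robust lower bound: the perturbed instance hides the message from a small model.) Let β, k, ℓ, n, r₂, p ∈ ℕ with k ≤ n ≤ 2^ℓ, R = k/n, 0 ≤ s ≤ n, t > 0, η ≥ 0 and k″ ≥ 0. Let Enc: 𝔽_{2^ℓ}^k → 𝔽_{2^ℓ}ⁿ be the Reed–Solomon encoding with dimension k and block length n. Let samp₂: {0,1}^{r₂} → (size-nℓ subsets of {1,…,β}) be a function such that for every distribution X on {0,1}^β with H_∞(X) ≥ β − p − t there exists a distribution Y on {0,1}^{nℓ} with H_∞(Y) ≥ k″ and SD((u₂, X|_{samp₂(u₂)}), (u₂, Y)) ≤ η, where u₂ is uniform on {0,1}^{r₂}. Let Q be uniformly distributed on {0,1}^β and let Z be any random variable jointly distributed with Q whose support has size at most 2^p. Let m be uniform on 𝔽_{2^ℓ}^k and let ρ be the random-subset noise on s coordinates, with u₂, m and ρ mutually independent and independent of (Q, Z). Then with probability at least 1 − 2^{−t} over z ← Z, the statistical distance between the conditional distribution of (u₂, Enc(m) + Q|_{samp₂(u₂)} + ρ) given Z = z (with Q|_{samp₂(u₂)} read as a vector in 𝔽_{2^ℓ}ⁿ and additions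 coordinatewise in 𝔽_{2^ℓ}) and the distribution (u₂, uniform on 𝔽_{2^ℓ}ⁿ) is at most η + 2^{(nℓ − k″)/2 − 1}·(1 − R)^s. -/

import Mathlib

open Finset

/-- Statistical distance between two (mass functions of) distributions on a finite set. -/
noncomputable def SD {Ω : Type*} [Fintype Ω] (p q : Ω → ℝ) : ℝ :=
  (∑ ω, |p ω - q ω|) / 2

/-- Min-entropy of a distribution on a finite set: `-log₂ (max_ω p ω)`. -/
noncomputable def minEntropy {Ω : Type*} [Fintype Ω] (p : Ω → ℝ) : ℝ :=
  - Real.logb 2 (⨆ ω, p ω)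

/-- Marginal of the second component of a joint distribution. -/
noncomputable def margZ {A B : Type*} [Fintype A] (p : A × B → ℝ) : B → ℝ :=
  fun b => ∑ a, p (a, b)

/-- Restriction `x|_S` of a string `x ∈ {0,1}^N` to a subset `S` of size `t`, listing the
coordinates of `S` in increasing order. -/
def restrict {N t : ℕ} (x : Fin N → ZMod 2) (S : Finset (Fin N)) (h : S.card = t) :
    Fin t → ZMod 2 :=
  fun j => x ((S.orderIsoOfFin h j : Fin N))

/-- Reed–Solomon encoding with dimension `k`, block length `n` and (distinct)
evaluation points `a : Fin n → F`:  `m ↦ (f_m(a₁), …, f_m(a_n))`. -/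
def rsEnc {F : Type*} [Field F] (k n : ℕ) (a : Fin n → F) (m : Fin k → F) : Fin n → F :=
  fun i => ∑ j : Fin k, m j * a i ^ (j : ℕ)

/-- Reading an `n·ℓ`-bit string as a vector in `𝔽_{2^ℓ}ⁿ`, via a fixed identification
`toF` of `{0,1}^ℓ` with the field. -/
def vecOf {F : Type*} (ℓ n : ℕ) (toF : (Fin ℓ → ZMod 2) ≃ F)
    (y : Fin (n * ℓ) → ZMod 2) : Fin n → F :=
  fun i => toF (fun b => y (finProdFinEquiv (i, b)))

section SGN
open Finset

/-- sign character on `ZMod 2`. -/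
noncomputable def sg (c : ZMod 2) : ℝ := if c = 0 then 1 else -1

lemma sg_zero : sg 0 = 1 := by simp [sg]

lemma sg_one : sg 1 = -1 := by norm_num [sg]

lemma sg_add (a b : ZMod 2) : sg (a + b) = sg a * sg b := by
  have h : ∀ c : ZMod 2, c = 0 ∨ c = 1 := by decide
  rcases h a with ha | ha <;> rcases h b with hb | hb <;> subst ha <;> subst hb <;>
    norm_num [sg] <;> decide

lemma sum_sg_eq_zero {G : Type*} [AddCommGroup G] [Fintype G] (f : G → ZMod 2)
    (hadd : ∀ x y, f (x + y) = f x + f y) (x₀ : G) (h₀ : f x₀ = 1) :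
    ∑ x, sg (f x) = 0 := by
  have h1 : ∑ x, sg (f (x + x₀)) = ∑ x, sg (f x) :=
    Fintype.sum_equiv (Equiv.addRight x₀) _ _ (fun x => rfl)
  have h2 : ∀ x : G, sg (f (x + x₀)) = sg (f x) * (-1) := by
    intro x; rw [hadd, sg_add, h₀, sg_one]
  rw [Finset.sum_congr rfl (fun x _ => h2 x), ← Finset.sum_mul] at h1
  linarith

/-- Nat version of the ratio bound `choose m s / choose n s ≤ (m/n)^s`. -/
lemma choose_ratio_nat (s : ℕ) : ∀ m n : ℕ, m ≤ n →
    m.choose s * n ^ s ≤ n.choose s * m ^ s := by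
  induction s with
  | zero => intro m n _; simp
  | succ s ih =>
    intro m n hmn
    have key : (m.choose (s+1) * n ^ (s+1)) * (s+1) ≤ (n.choose (s+1) * m ^ (s+1)) * (s+1) := by
      have e1 : (m.choose (s+1) * n ^ (s+1)) * (s+1) =
          (m.choose s * n ^ s) * ((m - s) * n) := by
        rw [mul_comm (m.choose (s+1)) (n^(s+1)), mul_assoc, Nat.choose_succ_right_eq]
        ring
      have e2 : (n.choose (s+1) * m ^ (s+1)) * (s+1) =
          (n.choose s * m ^ s) * ((n - s) * m) := by
        rw [mul_comm (n.choose (s+1)) (m^(s+1)), mul_assoc, Nat.choose_succ_right_eq]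
        ring
      rw [e1, e2]
      have hsub : (m - s) * n ≤ (n - s) * m := by
        rcases Nat.le_total m s with h | h
        · simp [Nat.sub_eq_zero_of_le h]
        · have h1 : (m - s) * n = m * n - s * n := by rw [Nat.sub_mul]
          have h2 : (n - s) * m = n * m - s * m := by rw [Nat.sub_mul]
          rw [h1, h2, mul_comm n m]
          exact Nat.sub_le_sub_left (Nat.mul_le_mul_left s hmn) _
      exact Nat.mul_le_mul (ih m n hmn) hsub
    exact Nat.le_of_mul_le_mul_right key (Nat.succ_pos s)

lemma SD_triangle {Ω : Type*} [Fintype Ω] (p q r : Ω → ℝ) : SD p r ≤ SD p q + SD q r := by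
  unfold SD
  rw [← add_div, ← Finset.sum_add_distrib]
  rw [div_le_div_iff_of_pos_right (by norm_num : (0:ℝ) < 2)]
  exact Finset.sum_le_sum fun ω _ => abs_sub_le _ _ _

lemma SD_kernel {U Y W : Type*} [Fintype U] [Fintype Y] [Fintype W]
    (A B : U × Y → ℝ) (K : Y → W → ℝ) (hK0 : ∀ y w, 0 ≤ K y w) (hK1 : ∀ y, ∑ w, K y w = 1) :
    SD (fun uw : U × W => ∑ y, A (uw.1, y) * K y uw.2)
       (fun uw : U × W => ∑ y, B (uw.1, y) * K y uw.2) ≤ SD A B := by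
  unfold SD
  rw [div_le_div_iff_of_pos_right (by norm_num : (0:ℝ) < 2)]
  have step1 : ∀ uw : U × W,
      |(∑ y, A (uw.1, y) * K y uw.2) - ∑ y, B (uw.1, y) * K y uw.2| ≤
        ∑ y, |A (uw.1, y) - B (uw.1, y)| * K y uw.2 := by
    intro uw
    rw [← Finset.sum_sub_distrib]
    refine (Finset.abs_sum_le_sum_abs _ _).trans (le_of_eq ?_)
    refine Finset.sum_congr rfl fun y _ => ?_
    rw [← sub_mul, abs_mul, abs_of_nonneg (hK0 y uw.2)]
  calc ∑ uw : U × W, |(∑ y, A (uw.1, y) * K y uw.2) - ∑ y, B (uw.1, y) * K y uw.2|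
      ≤ ∑ uw : U × W, ∑ y, |A (uw.1, y) - B (uw.1, y)| * K y uw.2 :=
        Finset.sum_le_sum fun uw _ => step1 uw
    _ = ∑ u : U, ∑ y : Y, ∑ w : W, |A (u, y) - B (u, y)| * K y w := by
        rw [Fintype.sum_prod_type]
        exact Finset.sum_congr rfl fun u _ => Finset.sum_comm
    _ = ∑ u : U, ∑ y : Y, |A (u, y) - B (u, y)| := by
        refine Finset.sum_congr rfl fun u _ => Finset.sum_congr rfl fun y _ => ?_
        rw [← Finset.mul_sum, hK1 y, mul_one]
    _ = ∑ w : U × Y, |A w - B w| := by rw [Fintype.sum_prod_type]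

lemma SD_scale_pair {U W : Type*} [Fintype U] [Fintype W] [Nonempty U] (f g : W → ℝ) :
    SD (fun uw : U × W => (1/(Fintype.card U : ℝ)) * f uw.2)
       (fun uw : U × W => (1/(Fintype.card U : ℝ)) * g uw.2) = SD f g := by
  unfold SD
  congr 1
  have hc : (0:ℝ) < (Fintype.card U : ℝ) := by
    exact_mod_cast Fintype.card_pos
  calc ∑ uw : U × W, |(1/(Fintype.card U : ℝ)) * f uw.2 - (1/(Fintype.card U : ℝ)) * g uw.2|
      = ∑ u : U, ∑ w : W, (1/(Fintype.card U : ℝ)) * |f w - g w| := by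
        rw [Fintype.sum_prod_type]
        refine Finset.sum_congr rfl fun u _ => Finset.sum_congr rfl fun w _ => ?_
        rw [← mul_sub, abs_mul, abs_of_nonneg (by positivity)]
    _ = ∑ w : W, |f w - g w| := by
        rw [Finset.sum_const, ← Finset.mul_sum, card_univ, nsmul_eq_mul, ← mul_assoc,
          mul_one_div, div_self hc.ne', one_mul]

end SGN
section Chars
open Finset

variable {F : Type*} [Field F] [Fintype F] [DecidableEq F]

lemma char_two_of_card {ℓ : ℕ} (hF : Fintype.card F = 2 ^ ℓ) : CharP F 2 := by
  haveI hC : CharP F (ringChar F) := ringChar.charP F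
  obtain ⟨m, hp, hcard⟩ := FiniteField.card F (ringChar F)
  have hp2 : ringChar F = 2 := by
    have hdvd : ringChar F ∣ 2 ^ ℓ := by
      rw [← hF, hcard]
      exact dvd_pow_self _ m.pos.ne'
    have h2 : ringChar F ∣ 2 := hp.dvd_of_dvd_pow hdvd
    exact (Nat.prime_dvd_prime_iff_eq hp Nat.prime_two).mp h2
  rw [← hp2]
  exact hC

lemma add_self_of_card {ℓ : ℕ} (hF : Fintype.card F = 2 ^ ℓ) (x : F) : x + x = 0 := by
  haveI := char_two_of_card hF
  have h2 : (2 : F) = 0 := by exact_mod_cast CharP.cast_eq_zero F 2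
  calc x + x = 2 * x := by ring
    _ = 0 := by rw [h2, zero_mul]

/-- There is a nonzero additive map `F → ZMod 2` when `char F = 2`. -/
lemma exists_T {ℓ : ℕ} (hF : Fintype.card F = 2 ^ ℓ) :
    ∃ T : F →+ ZMod 2, ∃ x₀ : F, T x₀ = 1 := by
  haveI := char_two_of_card hF
  letI : Algebra (ZMod 2) F := ZMod.algebra F 2
  let b := Module.Basis.ofVectorSpace (ZMod 2) F
  have : Nonempty (Module.Basis.ofVectorSpaceIndex (ZMod 2) F) := b.index_nonempty
  obtain ⟨i⟩ := this
  refine ⟨(b.coord i).toAddMonoidHom, b i, ?_⟩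
  simp [Module.Basis.coord_apply]

variable {n : ℕ}

/-- real-valued character of `F^n` indexed by `α`. -/
noncomputable def chr (T : F →+ ZMod 2) (α v : Fin n → F) : ℝ :=
  sg (T (∑ i, α i * v i))

lemma chr_comm (T : F →+ ZMod 2) (α v : Fin n → F) : chr T α v = chr T v α := by
  unfold chr
  congr 1
  rw [Finset.sum_congr rfl (fun i _ => mul_comm (α i) (v i))]

lemma chr_zero_right (T : F →+ ZMod 2) (α : Fin n → F) : chr T α 0 = 1 := by
  simp [chr, sg_zero]

lemma chr_add_right (T : F →+ ZMod 2) (α v w : Fin n → F) :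
    chr T α (v + w) = chr T α v * chr T α w := by
  unfold chr
  rw [← sg_add, ← map_add]
  congr 2
  rw [← Finset.sum_add_distrib]
  exact Finset.sum_congr rfl fun i _ => by simp [mul_add]

/-- character sum over the first argument. -/
lemma sum_chr_left (T : F →+ ZMod 2) (x₀ : F) (h₀ : T x₀ = 1) (v : Fin n → F) :
    ∑ α : Fin n → F, chr T α v = if v = 0 then ((Fintype.card F : ℝ)) ^ n else 0 := by
  by_cases hv : v = 0
  · subst hv
    simp only [if_true]
    have : ∀ α : Fin n → F, chr T α 0 = 1 := chr_zero_right T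
    rw [Finset.sum_congr rfl fun α _ => this α, Finset.sum_const, card_univ]
    simp [Fintype.card_fun]
  · rw [if_neg hv]
    obtain ⟨i, hi⟩ : ∃ i, v i ≠ 0 := by
      by_contra h
      push_neg at h
      exact hv (funext fun i => h i)
    unfold chr
    refine sum_sg_eq_zero (fun α : Fin n → F => T (∑ j, α j * v j)) ?_
      ((Pi.single i ((v i)⁻¹ * x₀) : Fin n → F)) ?_
    · intro α β
      show T (∑ j, (α + β) j * v j) = T (∑ j, α j * v j) + T (∑ j, β j * v j)
      rw [← map_add]
      congr 1
      rw [← Finset.sum_add_distrib]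
      exact Finset.sum_congr rfl fun j _ => by simp [add_mul]
    · have : ∑ j, (Pi.single i ((v i)⁻¹ * x₀) : Fin n → F) j * v j = x₀ := by
        rw [Finset.sum_eq_single i]
        · rw [Pi.single_eq_same, mul_comm, ← mul_assoc, mul_inv_cancel₀ hi, one_mul]
        · intro j _ hj; rw [Pi.single_eq_of_ne hj, zero_mul]
        · intro h; exact absurd (Finset.mem_univ i) h
      show T (∑ j, (Pi.single i ((v i)⁻¹ * x₀) : Fin n → F) j * v j) = 1
      rw [this, h₀]

lemma sum_chr_right (T : F →+ ZMod 2) (x₀ : F) (h₀ : T x₀ = 1) (α : Fin n → F) :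
    ∑ v : Fin n → F, chr T α v = if α = 0 then ((Fintype.card F : ℝ)) ^ n else 0 := by
  rw [Finset.sum_congr rfl fun v _ => chr_comm T α v]
  exact sum_chr_left T x₀ h₀ α

lemma parseval {ℓ : ℕ} (hF : Fintype.card F = 2 ^ ℓ)
    (T : F →+ ZMod 2) (x₀ : F) (h₀ : T x₀ = 1) (f : (Fin n → F) → ℝ) :
    ∑ α : Fin n → F, (∑ w, f w * chr T α w) ^ 2
      = (Fintype.card F : ℝ) ^ n * ∑ w, (f w) ^ 2 := by
  have expand : ∀ α : Fin n → F, (∑ w, f w * chr T α w) ^ 2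
      = ∑ w, ∑ w', f w * f w' * (chr T α w * chr T α w') := by
    intro α
    rw [sq, Finset.sum_mul_sum]
    exact Finset.sum_congr rfl fun w _ => Finset.sum_congr rfl fun w' _ => by ring
  rw [Finset.sum_congr rfl fun α _ => expand α]
  rw [Finset.sum_comm]
  have swap2 : ∀ w : Fin n → F, ∑ α : Fin n → F, ∑ w', f w * f w' * (chr T α w * chr T α w')
      = ∑ w', ∑ α : Fin n → F, f w * f w' * (chr T α w * chr T α w') :=
    fun w => Finset.sum_comm
  rw [Finset.sum_congr rfl fun w _ => swap2 w]
  have inner : ∀ w w' : Fin n → F, ∑ α : Fin n → F, f w * f w' * (chr T α w * chr T α w')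
      = f w * f w' * (if w + w' = 0 then ((Fintype.card F : ℝ)) ^ n else 0) := by
    intro w w'
    rw [← Finset.mul_sum]
    congr 1
    rw [Finset.sum_congr rfl fun α _ => (chr_add_right T α w w').symm]
    exact sum_chr_left T x₀ h₀ (w + w')
  rw [Finset.sum_congr rfl fun w _ => Finset.sum_congr rfl fun w' _ => inner w w']
  have collapse : ∀ w : Fin n → F,
      ∑ w', f w * f w' * (if w + w' = 0 then ((Fintype.card F : ℝ)) ^ n else 0)
        = (Fintype.card F : ℝ) ^ n * (f w) ^ 2 := by
    intro w
    have hiff : ∀ w' : Fin n → F, (w + w' = 0) ↔ (w' = w) := by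
      intro w'
      constructor
      · intro h
        funext i
        have h1 : w i + w' i = 0 := congrFun h i
        have h2 : w i + w i = 0 := add_self_of_card hF (w i)
        exact add_left_cancel (h1.trans h2.symm)
      · rintro rfl
        funext i
        exact add_self_of_card hF _
    have hterm : ∀ w' : Fin n → F,
        (f w * f w' * if w + w' = 0 then ((Fintype.card F : ℝ)) ^ n else 0)
          = if w' = w then (Fintype.card F : ℝ) ^ n * f w ^ 2 else 0 := by
      intro w'
      by_cases h : w' = w
      · rw [if_pos ((hiff w').mpr h), if_pos h, h]; ring
      · rw [if_neg (fun hc => h ((hiff w').mp hc)), if_neg h, mul_zero]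
    rw [Finset.sum_congr rfl fun w' _ => hterm w']
    rw [Finset.sum_ite_eq' univ w (fun _ => (Fintype.card F : ℝ) ^ n * f w ^ 2)]
    rw [if_pos (Finset.mem_univ w)]
  rw [Finset.sum_congr rfl fun w _ => collapse w, ← Finset.mul_sum]

end Chars
section Extractor
open Finset

variable {F : Type*} [Field F] [Fintype F] [DecidableEq F]

/-- The noise/encoding channel appearing in the theorem. -/
noncomputable def CH (k n s ℓ : ℕ) (a : Fin n → F) (toF : (Fin ℓ → ZMod 2) ≃ F)
    (y : Fin (n * ℓ) → ZMod 2) (w : Fin n → F) : ℝ :=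
  ∑ m : Fin k → F,
    ∑ S ∈ Finset.powersetCard s (Finset.univ : Finset (Fin n)),
      ∑ e : Fin n → F,
        (1 / (Fintype.card F : ℝ) ^ k) * (1 / (n.choose s : ℝ)) *
          (1 / (Fintype.card F : ℝ) ^ n) *
          (if (fun i => rsEnc k n a m i + vecOf ℓ n toF y i +
              (if i ∈ S then e i else 0)) = w then 1 else 0)

lemma sum_ite_collapse {W : Type*} [Fintype W] [DecidableEq W] (g : W) (h : W → ℝ) (c : ℝ) :
    ∑ w, c * (if g = w then (1:ℝ) else 0) * h w = c * h g := by
  have : ∀ w, c * (if g = w then (1:ℝ) else 0) * h w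
      = if g = w then c * h w else 0 := by
    intro w; by_cases hgw : g = w <;> simp [hgw]
  rw [Finset.sum_congr rfl fun w _ => this w,
    Finset.sum_ite_eq univ g (fun w => c * h w), if_pos (Finset.mem_univ g)]

lemma CH_nonneg (k n s ℓ : ℕ) (a : Fin n → F) (toF : (Fin ℓ → ZMod 2) ≃ F)
    (y : Fin (n * ℓ) → ZMod 2) (w : Fin n → F) : 0 ≤ CH k n s ℓ a toF y w := by
  unfold CH
  refine Finset.sum_nonneg fun m _ => Finset.sum_nonneg fun S _ => Finset.sum_nonneg fun e _ => ?_
  have h1 : (0:ℝ) ≤ (1 / (Fintype.card F : ℝ) ^ k) * (1 / (n.choose s : ℝ)) *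
      (1 / (Fintype.card F : ℝ) ^ n) := by positivity
  have h2 : (0:ℝ) ≤ (if (fun i => rsEnc k n a m i + vecOf ℓ n toF y i +
      (if i ∈ S then e i else 0)) = w then (1:ℝ) else 0) := by positivity
  exact mul_nonneg h1 h2

lemma CH_sum_one {k n s ℓ : ℕ} (hs : s ≤ n) (a : Fin n → F) (toF : (Fin ℓ → ZMod 2) ≃ F)
    (y : Fin (n * ℓ) → ZMod 2) : ∑ w, CH k n s ℓ a toF y w = 1 := by
  set c0 : ℝ := (1 / (Fintype.card F : ℝ) ^ k) * (1 / (n.choose s : ℝ)) *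
      (1 / (Fintype.card F : ℝ) ^ n) with hc0
  have hq : (0:ℝ) < (Fintype.card F : ℝ) := by exact_mod_cast Fintype.card_pos
  have hch : (0:ℝ) < (n.choose s : ℝ) := by exact_mod_cast Nat.choose_pos hs
  unfold CH
  rw [Finset.sum_comm]
  have inner : ∀ m : Fin k → F,
      ∑ w : Fin n → F, ∑ S ∈ Finset.powersetCard s (Finset.univ : Finset (Fin n)),
        ∑ e : Fin n → F, c0 * (if (fun i => rsEnc k n a m i + vecOf ℓ n toF y i +
            (if i ∈ S then e i else 0)) = w then (1:ℝ) else 0)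
      = (n.choose s : ℝ) * (Fintype.card F : ℝ) ^ n * c0 := by
    intro m
    rw [Finset.sum_comm]
    have hS : ∀ S ∈ Finset.powersetCard s (Finset.univ : Finset (Fin n)),
        ∑ w : Fin n → F, ∑ e : Fin n → F, c0 * (if (fun i => rsEnc k n a m i +
            vecOf ℓ n toF y i + (if i ∈ S then e i else 0)) = w then (1:ℝ) else 0)
        = (Fintype.card F : ℝ) ^ n * c0 := by
      intro S _
      rw [Finset.sum_comm]
      have he : ∀ e : Fin n → F,
          ∑ w : Fin n → F, c0 * (if (fun i => rsEnc k n a m i + vecOf ℓ n toF y i +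
              (if i ∈ S then e i else 0)) = w then (1:ℝ) else 0) = c0 := by
        intro e
        have := sum_ite_collapse (W := Fin n → F)
          (fun i => rsEnc k n a m i + vecOf ℓ n toF y i + (if i ∈ S then e i else 0))
          (fun _ => (1:ℝ)) c0
        simpa using this
      rw [Finset.sum_congr rfl (fun e _ => he e), Finset.sum_const, card_univ, Fintype.card_fun,
        Fintype.card_fin, nsmul_eq_mul]
      push_cast
      ring
    rw [Finset.sum_congr rfl hS, Finset.sum_const, Finset.card_powersetCard,
      card_univ, Fintype.card_fin, nsmul_eq_mul]
    ring
  rw [Finset.sum_congr rfl fun m _ => inner m, Finset.sum_const, card_univ,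
    Fintype.card_fun, Fintype.card_fin, nsmul_eq_mul]
  rw [hc0]
  push_cast
  field_simp

end Extractor
section Extractor2
open Finset

variable {F : Type*} [Field F] [Fintype F] [DecidableEq F]

/-- rearrangement of the pairing with a codeword. -/
lemma pairing_rsEnc {k n : ℕ} (a : Fin n → F) (α : Fin n → F) (m : Fin k → F) :
    ∑ i, α i * rsEnc k n a m i = ∑ j : Fin k, (∑ i, α i * a i ^ (j : ℕ)) * m j := by
  unfold rsEnc
  have h1 : ∀ i, α i * ∑ j : Fin k, m j * a i ^ (j:ℕ)
      = ∑ j : Fin k, α i * a i ^ (j:ℕ) * m j := by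
    intro i
    rw [Finset.mul_sum]
    exact Finset.sum_congr rfl fun j _ => by ring
  rw [Finset.sum_congr rfl fun i _ => h1 i, Finset.sum_comm]
  exact Finset.sum_congr rfl fun j _ => by rw [Finset.sum_mul]

lemma Mraw_dual {k n : ℕ} (T : F →+ ZMod 2) (a : Fin n → F) (α : Fin n → F)
    (hdual : ∀ j : Fin k, ∑ i, α i * a i ^ (j : ℕ) = 0) :
    ∑ m : Fin k → F, chr T α (rsEnc k n a m) = (Fintype.card F : ℝ) ^ k := by
  have : ∀ m : Fin k → F, chr T α (rsEnc k n a m) = 1 := by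
    intro m
    unfold chr
    rw [pairing_rsEnc]
    rw [Finset.sum_congr rfl fun j _ => by rw [hdual j, zero_mul]]
    simp [sg_zero]
  rw [Finset.sum_congr rfl fun m _ => this m, Finset.sum_const, card_univ,
    Fintype.card_fun, Fintype.card_fin, nsmul_eq_mul]
  push_cast; ring

lemma Mraw_not_dual {k n : ℕ} (T : F →+ ZMod 2) (x₀ : F) (h₀ : T x₀ = 1)
    (a : Fin n → F) (α : Fin n → F)
    (j₀ : Fin k) (hj : ∑ i, α i * a i ^ (j₀ : ℕ) ≠ 0) :
    ∑ m : Fin k → F, chr T α (rsEnc k n a m) = 0 := by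
  have hrw : ∀ m : Fin k → F, chr T α (rsEnc k n a m)
      = sg (T (∑ j : Fin k, (∑ i, α i * a i ^ (j:ℕ)) * m j)) := by
    intro m; unfold chr; rw [pairing_rsEnc]
  rw [Finset.sum_congr rfl fun m _ => hrw m]
  set c := ∑ i, α i * a i ^ (j₀ : ℕ) with hc
  refine sum_sg_eq_zero (fun m : Fin k → F => T (∑ j : Fin k, (∑ i, α i * a i ^ (j:ℕ)) * m j))
    ?_ ((Pi.single j₀ (c⁻¹ * x₀) : Fin k → F)) ?_
  · intro m m'
    show T (∑ j : Fin k, (∑ i, α i * a i ^ (j:ℕ)) * (m + m') j)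
        = T (∑ j : Fin k, (∑ i, α i * a i ^ (j:ℕ)) * m j)
          + T (∑ j : Fin k, (∑ i, α i * a i ^ (j:ℕ)) * m' j)
    rw [← map_add]
    congr 1
    rw [← Finset.sum_add_distrib]
    exact Finset.sum_congr rfl fun j _ => by simp [mul_add]
  · show T (∑ j : Fin k, (∑ i, α i * a i ^ (j:ℕ)) * (Pi.single j₀ (c⁻¹ * x₀) : Fin k → F) j) = 1
    have : ∑ j : Fin k, (∑ i, α i * a i ^ (j:ℕ)) * (Pi.single j₀ (c⁻¹ * x₀) : Fin k → F) j
        = x₀ := by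
      rw [Finset.sum_eq_single j₀]
      · rw [Pi.single_eq_same, ← hc, ← mul_assoc, mul_inv_cancel₀ hj, one_mul]
      · intro j _ hjj; rw [Pi.single_eq_of_ne hjj, mul_zero]
      · intro h; exact absurd (Finset.mem_univ j₀) h
    rw [this, h₀]

/-- character sum over the noise for a fixed support set. -/
lemma noise_char_sum {n : ℕ} (T : F →+ ZMod 2) (x₀ : F) (h₀ : T x₀ = 1)
    (α : Fin n → F) (S : Finset (Fin n)) :
    ∑ e : Fin n → F, chr T α (fun i => if i ∈ S then e i else 0)
      = if (∀ i ∈ S, α i = 0) then (Fintype.card F : ℝ) ^ n else 0 := by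
  have hrw : ∀ e : Fin n → F, chr T α (fun i => if i ∈ S then e i else 0)
      = sg (T (∑ i ∈ S, α i * e i)) := by
    intro e
    unfold chr
    congr 2
    rw [← Finset.sum_filter_add_sum_filter_not univ (fun i => i ∈ S)]
    have h2 : ∑ i ∈ univ.filter (fun i => ¬ i ∈ S), α i * (if i ∈ S then e i else 0) = 0 :=
      Finset.sum_eq_zero fun i hi => by
        rw [if_neg (Finset.mem_filter.mp hi).2, mul_zero]
    rw [h2, add_zero]
    have h3 : univ.filter (fun i => i ∈ S) = S := by
      ext i; simp
    rw [h3]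
    exact Finset.sum_congr rfl fun i hi => by simp [hi]
  rw [Finset.sum_congr rfl fun e _ => hrw e]
  by_cases hz : ∀ i ∈ S, α i = 0
  · rw [if_pos hz]
    have : ∀ e : Fin n → F, sg (T (∑ i ∈ S, α i * e i)) = 1 := by
      intro e
      rw [Finset.sum_congr rfl fun i hi => by rw [hz i hi, zero_mul]]
      simp [sg_zero]
    rw [Finset.sum_congr rfl fun e _ => this e, Finset.sum_const, card_univ,
      Fintype.card_fun, Fintype.card_fin, nsmul_eq_mul]
    push_cast; ring
  · rw [if_neg hz]
    push_neg at hz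
    obtain ⟨i₀, hi₀S, hi₀⟩ := hz
    refine sum_sg_eq_zero (fun e : Fin n → F => T (∑ i ∈ S, α i * e i)) ?_
      ((Pi.single i₀ ((α i₀)⁻¹ * x₀) : Fin n → F)) ?_
    · intro e e'
      show T (∑ i ∈ S, α i * (e + e') i)
          = T (∑ i ∈ S, α i * e i) + T (∑ i ∈ S, α i * e' i)
      rw [← map_add]
      congr 1
      rw [← Finset.sum_add_distrib]
      exact Finset.sum_congr rfl fun i _ => by simp [mul_add]
    · show T (∑ i ∈ S, α i * (Pi.single i₀ ((α i₀)⁻¹ * x₀) : Fin n → F) i) = 1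
      have : ∑ i ∈ S, α i * (Pi.single i₀ ((α i₀)⁻¹ * x₀) : Fin n → F) i = x₀ := by
        rw [Finset.sum_eq_single i₀]
        · rw [Pi.single_eq_same, ← mul_assoc, mul_inv_cancel₀ hi₀, one_mul]
        · intro i _ hii; rw [Pi.single_eq_of_ne hii, mul_zero]
        · intro h; exact absurd hi₀S h
      rw [this, h₀]

/-- Dual distance of the RS code: a nonzero dual word has weight at least `k+1`. -/
lemma dual_weight {k n : ℕ} (hkn : k ≤ n) (a : Fin n → F) (ha : Function.Injective a)
    (α : Fin n → F) (hα : α ≠ 0)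
    (hdual : ∀ j : Fin k, ∑ i, α i * a i ^ (j : ℕ) = 0) :
    (univ.filter (fun i => α i = 0)).card + k < n := by
  classical
  set Tset := univ.filter (fun i => α i ≠ 0) with hTset
  have hTne : Tset.Nonempty := by
    obtain ⟨i, hi⟩ : ∃ i, α i ≠ 0 := by
      by_contra h; push_neg at h; exact hα (funext fun i => h i)
    exact ⟨i, by simp [hTset, hi]⟩
  have hsplit : (univ.filter (fun i => α i = 0)).card + Tset.card = n := by
    rw [hTset]
    have := Finset.card_filter_add_card_filter_not
      (s := (univ : Finset (Fin n))) (p := fun i => α i = 0)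
    simpa [Fintype.card_fin] using this
  by_contra hcon
  push_neg at hcon
  have hTk : Tset.card ≤ k := by omega
  obtain ⟨i₀, hi₀⟩ := hTne
  have hαi₀ : α i₀ ≠ 0 := by simpa [hTset] using hi₀
  set P : Polynomial F := ∏ i ∈ Tset.erase i₀, (Polynomial.X - Polynomial.C (a i)) with hP
  have hdeg : P.natDegree < k := by
    rw [hP]
    have h1 : (∏ i ∈ Tset.erase i₀, (Polynomial.X - Polynomial.C (a i))).natDegree
        = ∑ i ∈ Tset.erase i₀, (Polynomial.X - Polynomial.C (a i)).natDegree :=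
      Polynomial.natDegree_prod _ _ fun i _ => Polynomial.X_sub_C_ne_zero (a i)
    rw [h1]
    have h2 : ∑ i ∈ Tset.erase i₀, (Polynomial.X - Polynomial.C (a i)).natDegree
        = (Tset.erase i₀).card := by
      rw [Finset.sum_congr rfl fun i _ => Polynomial.natDegree_X_sub_C (a i)]
      simp
    rw [h2, Finset.card_erase_of_mem hi₀]
    have : 1 ≤ Tset.card := Finset.card_pos.mpr ⟨i₀, hi₀⟩
    omega
  have heval : ∑ i, α i * P.eval (a i) = 0 := by
    have hrange : ∀ x : F, P.eval x
        = ∑ j ∈ Finset.range (P.natDegree + 1), P.coeff j * x ^ j := by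
      intro x; exact Polynomial.eval_eq_sum_range x
    rw [Finset.sum_congr rfl fun i _ => by rw [hrange (a i)]]
    have h1 : ∀ i, α i * ∑ j ∈ Finset.range (P.natDegree + 1), P.coeff j * (a i) ^ j
        = ∑ j ∈ Finset.range (P.natDegree + 1), P.coeff j * (α i * (a i) ^ j) := by
      intro i
      rw [Finset.mul_sum]
      exact Finset.sum_congr rfl fun j _ => by ring
    rw [Finset.sum_congr rfl fun i _ => h1 i, Finset.sum_comm]
    refine Finset.sum_eq_zero fun j hj => ?_
    have hjk : j < k := by
      have := Finset.mem_range.mp hj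
      omega
    rw [← Finset.mul_sum]
    have := hdual ⟨j, hjk⟩
    simp only at this
    rw [this, mul_zero]
  have hP0 : P.eval (a i₀) ≠ 0 := by
    rw [hP, Polynomial.eval_prod]
    refine Finset.prod_ne_zero_iff.mpr fun i hi => ?_
    rw [Polynomial.eval_sub, Polynomial.eval_X, Polynomial.eval_C]
    have hne : i ≠ i₀ := Finset.ne_of_mem_erase hi
    exact sub_ne_zero_of_ne fun hcontra => hne (ha hcontra.symm)
  have hsum : ∑ i, α i * P.eval (a i) = α i₀ * P.eval (a i₀) := by
    rw [Finset.sum_eq_single i₀]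
    · intro i _ hii
      by_cases hiT : i ∈ Tset
      · have hiE : i ∈ Tset.erase i₀ := Finset.mem_erase.mpr ⟨hii, hiT⟩
        have : P.eval (a i) = 0 := by
          rw [hP, Polynomial.eval_prod]
          exact Finset.prod_eq_zero hiE (by
            rw [Polynomial.eval_sub, Polynomial.eval_X, Polynomial.eval_C, sub_self])
        rw [this, mul_zero]
      · have : α i = 0 := by
          by_contra hne
          exact hiT (by simp [hTset, hne])
        rw [this, zero_mul]
    · intro h; exact absurd (Finset.mem_univ i₀) h
  rw [hsum] at heval
  exact hαi₀ (by
    rcases mul_eq_zero.mp heval with h | h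
    · exact h
    · exact absurd h hP0)

/-- the identification of bit strings with vectors, as an equivalence. -/
def vecEquiv (ℓ n : ℕ) (toF : (Fin ℓ → ZMod 2) ≃ F) :
    (Fin (n * ℓ) → ZMod 2) ≃ (Fin n → F) :=
  ((Equiv.arrowCongr (finProdFinEquiv : Fin n × Fin ℓ ≃ Fin (n * ℓ)).symm
      (Equiv.refl (ZMod 2))).trans
    (Equiv.curry (Fin n) (Fin ℓ) (ZMod 2))).trans
    (Equiv.arrowCongr (Equiv.refl (Fin n)) toF)

lemma vecEquiv_apply (ℓ n : ℕ) (toF : (Fin ℓ → ZMod 2) ≃ F)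
    (y : Fin (n * ℓ) → ZMod 2) : vecEquiv ℓ n toF y = vecOf ℓ n toF y := rfl

lemma count_avoiding {n s : ℕ} (α : Fin n → F) :
    (Finset.powersetCard s (Finset.univ : Finset (Fin n))).filter
        (fun S => ∀ i ∈ S, α i = 0)
      = Finset.powersetCard s (univ.filter (fun i => α i = 0)) := by
  ext S
  simp only [Finset.mem_filter, Finset.mem_powersetCard, Finset.subset_iff,
    Finset.mem_filter, Finset.mem_univ, true_and]
  tauto

end Extractor2
section Extractor3
open Finset

variable {F : Type*} [Field F] [Fintype F] [DecidableEq F]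

lemma CH_fourier {k n s ℓ : ℕ} (T : F →+ ZMod 2) (a : Fin n → F)
    (toF : (Fin ℓ → ZMod 2) ≃ F) (y : Fin (n * ℓ) → ZMod 2) (α : Fin n → F) :
    ∑ w : Fin n → F, CH k n s ℓ a toF y w * chr T α w
      = ((1 / (Fintype.card F : ℝ) ^ k) * (1 / (n.choose s : ℝ)) *
          (1 / (Fintype.card F : ℝ) ^ n)) *
        ((∑ m : Fin k → F, chr T α (rsEnc k n a m)) *
          (∑ S ∈ Finset.powersetCard s (Finset.univ : Finset (Fin n)),
            ∑ e : Fin n → F, chr T α (fun i => if i ∈ S then e i else 0))) *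
        chr T α (vecOf ℓ n toF y) := by
  set c0 : ℝ := (1 / (Fintype.card F : ℝ) ^ k) * (1 / (n.choose s : ℝ)) *
      (1 / (Fintype.card F : ℝ) ^ n) with hc0
  set A : (Fin k → F) → ℝ := fun m => chr T α (rsEnc k n a m) with hA
  set Bc : ℝ := chr T α (vecOf ℓ n toF y) with hB
  set C : Finset (Fin n) → (Fin n → F) → ℝ :=
    fun S e => chr T α (fun i => if i ∈ S then e i else 0) with hC
  have step2 : ∀ (m : Fin k → F) (S : Finset (Fin n)) (e : Fin n → F),
      ∑ w : Fin n → F, c0 * (if (fun i => rsEnc k n a m i + vecOf ℓ n toF y i +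
          (if i ∈ S then e i else 0)) = w then (1:ℝ) else 0) * chr T α w
        = A m * Bc * C S e * c0 := by
    intro m S e
    rw [sum_ite_collapse (fun i => rsEnc k n a m i + vecOf ℓ n toF y i +
      (if i ∈ S then e i else 0)) (chr T α) c0]
    have hfun : (fun i => rsEnc k n a m i + vecOf ℓ n toF y i + (if i ∈ S then e i else 0))
        = rsEnc k n a m + vecOf ℓ n toF y + (fun i => if i ∈ S then e i else 0) := rfl
    rw [hfun, chr_add_right, chr_add_right]
    rw [hA, hB, hC]
    ring
  calc ∑ w : Fin n → F, CH k n s ℓ a toF y w * chr T α w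
      = ∑ w : Fin n → F, ∑ m : Fin k → F,
          (∑ S ∈ Finset.powersetCard s (Finset.univ : Finset (Fin n)), ∑ e : Fin n → F,
            c0 * (if (fun i => rsEnc k n a m i + vecOf ℓ n toF y i +
              (if i ∈ S then e i else 0)) = w then (1:ℝ) else 0)) * chr T α w := by
        refine Finset.sum_congr rfl fun w _ => ?_
        rw [show CH k n s ℓ a toF y w = ∑ m : Fin k → F,
          ∑ S ∈ Finset.powersetCard s (Finset.univ : Finset (Fin n)), ∑ e : Fin n → F,
            c0 * (if (fun i => rsEnc k n a m i + vecOf ℓ n toF y i +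
              (if i ∈ S then e i else 0)) = w then (1:ℝ) else 0) from rfl]
        exact Finset.sum_mul _ _ _
    _ = ∑ m : Fin k → F, ∑ w : Fin n → F,
          (∑ S ∈ Finset.powersetCard s (Finset.univ : Finset (Fin n)), ∑ e : Fin n → F,
            c0 * (if (fun i => rsEnc k n a m i + vecOf ℓ n toF y i +
              (if i ∈ S then e i else 0)) = w then (1:ℝ) else 0)) * chr T α w :=
        Finset.sum_comm
    _ = ∑ m : Fin k → F, ∑ S ∈ Finset.powersetCard s (Finset.univ : Finset (Fin n)),
          ∑ e : Fin n → F, A m * Bc * C S e * c0 := by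
        refine Finset.sum_congr rfl fun m _ => ?_
        calc ∑ w : Fin n → F,
              (∑ S ∈ Finset.powersetCard s (Finset.univ : Finset (Fin n)), ∑ e : Fin n → F,
                c0 * (if (fun i => rsEnc k n a m i + vecOf ℓ n toF y i +
                  (if i ∈ S then e i else 0)) = w then (1:ℝ) else 0)) * chr T α w
            = ∑ w : Fin n → F,
                ∑ S ∈ Finset.powersetCard s (Finset.univ : Finset (Fin n)),
                  (∑ e : Fin n → F,
                    c0 * (if (fun i => rsEnc k n a m i + vecOf ℓ n toF y i +
                      (if i ∈ S then e i else 0)) = w then (1:ℝ) else 0)) * chr T α w := by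
              exact Finset.sum_congr rfl fun w _ => Finset.sum_mul _ _ _
          _ = ∑ S ∈ Finset.powersetCard s (Finset.univ : Finset (Fin n)),
                ∑ w : Fin n → F,
                  (∑ e : Fin n → F,
                    c0 * (if (fun i => rsEnc k n a m i + vecOf ℓ n toF y i +
                      (if i ∈ S then e i else 0)) = w then (1:ℝ) else 0)) * chr T α w :=
              Finset.sum_comm
          _ = ∑ S ∈ Finset.powersetCard s (Finset.univ : Finset (Fin n)),
                ∑ w : Fin n → F, ∑ e : Fin n → F,
                  c0 * (if (fun i => rsEnc k n a m i + vecOf ℓ n toF y i +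
                    (if i ∈ S then e i else 0)) = w then (1:ℝ) else 0) * chr T α w := by
              exact Finset.sum_congr rfl fun S _ =>
                Finset.sum_congr rfl fun w _ => Finset.sum_mul _ _ _
          _ = ∑ S ∈ Finset.powersetCard s (Finset.univ : Finset (Fin n)),
                ∑ e : Fin n → F, ∑ w : Fin n → F,
                  c0 * (if (fun i => rsEnc k n a m i + vecOf ℓ n toF y i +
                    (if i ∈ S then e i else 0)) = w then (1:ℝ) else 0) * chr T α w := by
              exact Finset.sum_congr rfl fun S _ => Finset.sum_comm
          _ = ∑ S ∈ Finset.powersetCard s (Finset.univ : Finset (Fin n)),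
                ∑ e : Fin n → F, A m * Bc * C S e * c0 := by
              exact Finset.sum_congr rfl fun S _ =>
                Finset.sum_congr rfl fun e _ => step2 m S e
    _ = ∑ m : Fin k → F, (A m * Bc * c0) *
          (∑ S ∈ Finset.powersetCard s (Finset.univ : Finset (Fin n)),
            ∑ e : Fin n → F, C S e) := by
        refine Finset.sum_congr rfl fun m _ => ?_
        calc ∑ S ∈ Finset.powersetCard s (Finset.univ : Finset (Fin n)),
              ∑ e : Fin n → F, A m * Bc * C S e * c0
            = ∑ S ∈ Finset.powersetCard s (Finset.univ : Finset (Fin n)),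
                (A m * Bc * c0) * ∑ e : Fin n → F, C S e := by
              refine Finset.sum_congr rfl fun S _ => ?_
              rw [Finset.mul_sum]
              exact Finset.sum_congr rfl fun e _ => by ring
          _ = (A m * Bc * c0) * ∑ S ∈ Finset.powersetCard s (Finset.univ : Finset (Fin n)),
                ∑ e : Fin n → F, C S e := (Finset.mul_sum _ _ _).symm
    _ = (∑ m : Fin k → F, A m) * (Bc * c0 *
          (∑ S ∈ Finset.powersetCard s (Finset.univ : Finset (Fin n)),
            ∑ e : Fin n → F, C S e)) := by
        rw [Finset.sum_mul]
        exact Finset.sum_congr rfl fun m _ => by ring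
    _ = c0 * ((∑ m : Fin k → F, A m) *
          (∑ S ∈ Finset.powersetCard s (Finset.univ : Finset (Fin n)),
            ∑ e : Fin n → F, C S e)) * Bc := by ring

end Extractor3
section Extractor4
open Finset

variable {F : Type*} [Field F] [Fintype F] [DecidableEq F]

lemma extractor_SD {k n s ℓ : ℕ} (hkn : k ≤ n) (hs : s ≤ n)
    (hF : Fintype.card F = 2 ^ ℓ)
    (a : Fin n → F) (ha : Function.Injective a) (toF : (Fin ℓ → ZMod 2) ≃ F)
    (k'' : ℝ) (Y : (Fin (n * ℓ) → ZMod 2) → ℝ)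
    (hY0 : ∀ y, 0 ≤ Y y) (hY1 : ∑ y, Y y = 1) (hYmax : ∀ y, Y y ≤ (2:ℝ) ^ (-k'')) :
    SD (fun w : Fin n → F => ∑ y, Y y * CH k n s ℓ a toF y w)
       (fun _ : Fin n → F => 1 / 2 ^ (n * ℓ)) ≤
    (2:ℝ) ^ (((n * ℓ : ℝ) - k'') / 2 - 1) * (1 - (k : ℝ) / n) ^ s := by
  classical
  obtain ⟨T, x₀, h₀⟩ := exists_T hF
  have hq0 : (0:ℝ) < (Fintype.card F : ℝ) := by exact_mod_cast Fintype.card_pos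
  have hqn0 : (0:ℝ) < (Fintype.card F : ℝ) ^ n := pow_pos hq0 n
  have hqk0 : (0:ℝ) < (Fintype.card F : ℝ) ^ k := pow_pos hq0 k
  have hqn : ((Fintype.card F : ℝ)) ^ n = 2 ^ (n * ℓ) := by
    rw [hF]
    push_cast
    rw [← pow_mul, Nat.mul_comm ℓ n]
  have hC0 : (0:ℝ) < (n.choose s : ℝ) := by exact_mod_cast Nat.choose_pos hs
  have hε0 : (0:ℝ) ≤ 1 - (k:ℝ)/n := by
    rcases Nat.eq_zero_or_pos n with hn0 | hn0
    · simp [hn0]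
    · have h1 : (k:ℝ) ≤ (n:ℝ) := by exact_mod_cast hkn
      have h2 : (0:ℝ) < (n:ℝ) := by exact_mod_cast hn0
      rw [sub_nonneg]
      exact div_le_one_of_le₀ h1 h2.le
  have hεs0 : (0:ℝ) ≤ (1 - (k:ℝ)/n) ^ s := pow_nonneg hε0 s
  set D : (Fin n → F) → ℝ := fun w => ∑ y, Y y * CH k n s ℓ a toF y w with hD
  have hD1 : ∑ w, D w = 1 := by
    rw [hD, Finset.sum_comm]
    calc ∑ y, ∑ w : Fin n → F, Y y * CH k n s ℓ a toF y w
        = ∑ y, Y y * ∑ w : Fin n → F, CH k n s ℓ a toF y w :=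
          Finset.sum_congr rfl fun y _ => (Finset.mul_sum _ _ _).symm
      _ = ∑ y, Y y := Finset.sum_congr rfl fun y _ => by
          rw [CH_sum_one hs a toF y, mul_one]
      _ = 1 := hY1
  set G : (Fin n → F) → ℝ := fun w => Y ((vecEquiv ℓ n toF).symm w) with hG
  set Gh : (Fin n → F) → ℝ := fun α => ∑ y, Y y * chr T α (vecOf ℓ n toF y) with hGh
  have hGh_eq : ∀ α, Gh α = ∑ w, G w * chr T α w := by
    intro α
    refine Fintype.sum_equiv (vecEquiv ℓ n toF) _ _ fun y => ?_
    rw [← vecEquiv_apply ℓ n toF y]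
    simp only [hG, Equiv.symm_apply_apply]
  have hGsq : ∑ w, G w ^ 2 = ∑ y, Y y ^ 2 :=
    (Fintype.sum_equiv (vecEquiv ℓ n toF) _ _ fun y => by
      simp only [hG, Equiv.symm_apply_apply]).symm
  have hYsq : ∑ y, Y y ^ 2 ≤ (2:ℝ)^(-k'') := by
    calc ∑ y, Y y ^ 2 ≤ ∑ y, (2:ℝ)^(-k'') * Y y :=
        Finset.sum_le_sum fun y _ => by
          rw [sq]; exact mul_le_mul_of_nonneg_right (hYmax y) (hY0 y)
      _ = (2:ℝ)^(-k'') := by rw [← Finset.mul_sum, hY1, mul_one]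
  set c0 : ℝ := (1 / (Fintype.card F : ℝ) ^ k) * (1 / (n.choose s : ℝ)) *
      (1 / (Fintype.card F : ℝ) ^ n) with hc0
  set Mr : (Fin n → F) → ℝ := fun α => ∑ m : Fin k → F, chr T α (rsEnc k n a m) with hMr
  set Rr : (Fin n → F) → ℝ := fun α =>
    ∑ S ∈ Finset.powersetCard s (Finset.univ : Finset (Fin n)), ∑ e : Fin n → F,
      chr T α (fun i => if i ∈ S then e i else 0) with hRr
  have hDhat : ∀ α, ∑ w, D w * chr T α w = c0 * (Mr α * Rr α) * Gh α := by
    intro α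
    calc ∑ w, D w * chr T α w
        = ∑ w, ∑ y, Y y * CH k n s ℓ a toF y w * chr T α w := by
          refine Finset.sum_congr rfl fun w _ => ?_
          rw [hD]
          exact Finset.sum_mul _ _ _
      _ = ∑ y, ∑ w, Y y * CH k n s ℓ a toF y w * chr T α w := Finset.sum_comm
      _ = ∑ y, Y y * ∑ w, CH k n s ℓ a toF y w * chr T α w := by
          refine Finset.sum_congr rfl fun y _ => ?_
          rw [Finset.mul_sum]
          exact Finset.sum_congr rfl fun w _ => by ring
      _ = ∑ y, Y y * (c0 * (Mr α * Rr α) * chr T α (vecOf ℓ n toF y)) :=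
          Finset.sum_congr rfl fun y _ => by rw [CH_fourier T a toF y α]
      _ = ∑ y, (c0 * (Mr α * Rr α)) * (Y y * chr T α (vecOf ℓ n toF y)) :=
          Finset.sum_congr rfl fun y _ => by ring
      _ = (c0 * (Mr α * Rr α)) * ∑ y, Y y * chr T α (vecOf ℓ n toF y) :=
          (Finset.mul_sum _ _ _).symm
      _ = c0 * (Mr α * Rr α) * Gh α := rfl
  have hKey : ∀ α : Fin n → F, α ≠ 0 →
      (c0 * (Mr α * Rr α))^2 ≤ ((1 - (k:ℝ)/n) ^ s)^2 := by
    intro α hα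
    by_cases hdual : ∀ j : Fin k, ∑ i, α i * a i ^ (j:ℕ) = 0
    · have hM : Mr α = (Fintype.card F : ℝ) ^ k := Mraw_dual T a α hdual
      have hRval : Rr α =
          (((univ.filter (fun i => α i = 0)).card.choose s : ℝ)) * (Fintype.card F : ℝ) ^ n := by
        show (∑ S ∈ Finset.powersetCard s (Finset.univ : Finset (Fin n)), ∑ e : Fin n → F,
            chr T α (fun i => if i ∈ S then e i else 0)) = _
        rw [Finset.sum_congr rfl fun S _ => noise_char_sum T x₀ h₀ α S]
        rw [← Finset.sum_filter, count_avoiding α, Finset.sum_const,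
          Finset.card_powersetCard, nsmul_eq_mul]
      set z0 := (univ.filter (fun i => α i = 0)).card with hz0
      have hzk : z0 + k < n := dual_weight hkn a ha α hα hdual
      have hn0 : 0 < n := lt_of_le_of_lt (Nat.zero_le _) hzk
      have hnR : (0:ℝ) < (n:ℝ) := by exact_mod_cast hn0
      have hval : c0 * (Mr α * Rr α) = (z0.choose s : ℝ) / (n.choose s : ℝ) := by
        rw [hM, hRval, hc0]
        field_simp
      have hnat : z0.choose s * n ^ s ≤ n.choose s * (n - k)^s :=
        le_trans (choose_ratio_nat s z0 n (by omega))
          (Nat.mul_le_mul_left _ (Nat.pow_le_pow_left (by omega) s))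
      have hcastineq : (z0.choose s:ℝ) * (n:ℝ)^s ≤ (n.choose s:ℝ) * ((n:ℝ) - k)^s := by
        have h1 : ((n - k : ℕ):ℝ) = (n:ℝ) - k := by
          rw [Nat.cast_sub hkn]
        calc (z0.choose s:ℝ) * (n:ℝ)^s ≤ (n.choose s:ℝ) * ((n-k:ℕ):ℝ)^s := by
              exact_mod_cast hnat
          _ = (n.choose s:ℝ) * ((n:ℝ) - k)^s := by rw [h1]
      have hεeq : (1 - (k:ℝ)/n) ^ s = ((n:ℝ) - k)^s / (n:ℝ)^s := by
        rw [← div_pow]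
        congr 1
        field_simp
      have hineq : (z0.choose s : ℝ) / (n.choose s) ≤ (1 - (k:ℝ)/n) ^ s := by
        rw [hεeq, div_le_div_iff₀ hC0 (pow_pos hnR s)]
        calc (z0.choose s:ℝ) * (n:ℝ)^s ≤ (n.choose s:ℝ) * ((n:ℝ) - k)^s := hcastineq
          _ = ((n:ℝ) - k)^s * (n.choose s:ℝ) := by ring
      rw [hval]
      have h0le : (0:ℝ) ≤ (z0.choose s:ℝ)/(n.choose s) := by positivity
      exact pow_le_pow_left₀ h0le hineq 2
    · push_neg at hdual
      obtain ⟨j₀, hj₀⟩ := hdual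
      have hM : Mr α = 0 := Mraw_not_dual T x₀ h₀ a α j₀ hj₀
      rw [hM]
      simpa using sq_nonneg ((1 - (k:ℝ)/n) ^ s)
  -- Parseval for D - u
  set u : ℝ := 1/2^(n*ℓ) with hu
  have huq : u * (Fintype.card F : ℝ) ^ n = 1 := by
    rw [hqn, hu, one_div, inv_mul_cancel₀ (by positivity)]
  set f : (Fin n → F) → ℝ := fun w => D w - u with hf
  have hfhat : ∀ α : Fin n → F, α ≠ 0 →
      ∑ w, f w * chr T α w = ∑ w, D w * chr T α w := by
    intro α hα
    have h1 : ∑ w, f w * chr T α w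
        = ∑ w, D w * chr T α w - u * ∑ w, chr T α w := by
      rw [Finset.mul_sum, ← Finset.sum_sub_distrib]
      exact Finset.sum_congr rfl fun w _ => by rw [hf]; ring
    rw [h1, sum_chr_right T x₀ h₀ α, if_neg hα, mul_zero, sub_zero]
  have hfhat0 : ∑ w, f w * chr T (0 : Fin n → F) w = 0 := by
    have hchr1 : ∀ w : Fin n → F, chr T (0 : Fin n → F) w = 1 := fun w => by
      rw [chr_comm]; exact chr_zero_right T w
    calc ∑ w, f w * chr T (0 : Fin n → F) w = ∑ w, f w :=
        Finset.sum_congr rfl fun w _ => by rw [hchr1 w, mul_one]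
      _ = ∑ w, D w - (Fintype.card F : ℝ) ^ n * u := by
          rw [hf, Finset.sum_sub_distrib, Finset.sum_const, card_univ, Fintype.card_fun,
            Fintype.card_fin, nsmul_eq_mul]
          push_cast
          ring
      _ = 0 := by rw [hD1]; rw [mul_comm, huq]; ring
  have hpar := parseval hF T x₀ h₀ f
  have hsplit : ∑ α : Fin n → F, (∑ w, f w * chr T α w)^2
      = ∑ α ∈ (univ : Finset (Fin n → F)).erase 0, (∑ w, D w * chr T α w)^2 := by
    have h1 : ∑ α : Fin n → F, (∑ w, f w * chr T α w)^2
        = (∑ α ∈ (univ : Finset (Fin n → F)).erase 0, (∑ w, f w * chr T α w)^2)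
          + (∑ w, f w * chr T (0 : Fin n → F) w)^2 :=
      (Finset.sum_erase_add _ _ (Finset.mem_univ (0 : Fin n → F))).symm
    rw [h1, hfhat0, zero_pow (by norm_num : (2:ℕ) ≠ 0), add_zero]
    exact Finset.sum_congr rfl fun α hα => by
      rw [hfhat α (Finset.ne_of_mem_erase hα)]
  have hGhpar : ∑ α : Fin n → F, Gh α ^ 2
      = (Fintype.card F : ℝ) ^ n * ∑ y, Y y ^ 2 := by
    rw [Finset.sum_congr rfl fun α _ => by rw [hGh_eq α]]
    rw [parseval hF T x₀ h₀ G, hGsq]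
  have hbound : ∑ α ∈ (univ : Finset (Fin n → F)).erase 0, (∑ w, D w * chr T α w)^2
      ≤ ((1 - (k:ℝ)/n) ^ s)^2 * ((Fintype.card F : ℝ) ^ n * (2:ℝ)^(-k'')) := by
    calc ∑ α ∈ (univ : Finset (Fin n → F)).erase 0, (∑ w, D w * chr T α w)^2
        ≤ ∑ α ∈ (univ : Finset (Fin n → F)).erase 0, ((1 - (k:ℝ)/n) ^ s)^2 * Gh α ^ 2 := by
          refine Finset.sum_le_sum fun α hα => ?_
          rw [hDhat α, mul_pow]
          exact mul_le_mul_of_nonneg_right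
            (hKey α (Finset.ne_of_mem_erase hα)) (sq_nonneg _)
      _ ≤ ∑ α : Fin n → F, ((1 - (k:ℝ)/n) ^ s)^2 * Gh α ^ 2 :=
          Finset.sum_le_sum_of_subset_of_nonneg (Finset.subset_univ _)
            (fun α _ _ => by positivity)
      _ = ((1 - (k:ℝ)/n) ^ s)^2 * ((Fintype.card F : ℝ) ^ n * ∑ y, Y y ^ 2) := by
          rw [← Finset.mul_sum, hGhpar]
      _ ≤ ((1 - (k:ℝ)/n) ^ s)^2 * ((Fintype.card F : ℝ) ^ n * (2:ℝ)^(-k'')) := by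
          refine mul_le_mul_of_nonneg_left ?_ (sq_nonneg _)
          exact mul_le_mul_of_nonneg_left hYsq hqn0.le
  have hsum_f2 : ∑ w, f w ^ 2 ≤ ((1 - (k:ℝ)/n) ^ s)^2 * (2:ℝ)^(-k'') := by
    have h1 : (Fintype.card F : ℝ) ^ n * ∑ w, f w ^ 2
        ≤ (Fintype.card F : ℝ) ^ n * (((1 - (k:ℝ)/n) ^ s)^2 * (2:ℝ)^(-k'')) := by
      rw [← hpar, hsplit]
      calc ∑ α ∈ (univ : Finset (Fin n → F)).erase 0, (∑ w, D w * chr T α w)^2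
          ≤ ((1 - (k:ℝ)/n) ^ s)^2 * ((Fintype.card F : ℝ) ^ n * (2:ℝ)^(-k'')) := hbound
        _ = (Fintype.card F : ℝ) ^ n * (((1 - (k:ℝ)/n) ^ s)^2 * (2:ℝ)^(-k'')) := by ring
    exact le_of_mul_le_mul_left h1 hqn0
  have hSDeq : SD D (fun _ : Fin n → F => u) = (∑ w, |f w|)/2 := rfl
  have habs0 : (0:ℝ) ≤ ∑ w, |f w| := Finset.sum_nonneg fun w _ => abs_nonneg _
  have hCS : (∑ w, |f w|)^2 ≤ (Fintype.card F : ℝ) ^ n * ∑ w, f w ^ 2 := by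
    have h1 := sq_sum_le_card_mul_sum_sq (s := (univ : Finset (Fin n → F)))
      (f := fun w => |f w|)
    have h2 : ∑ w : Fin n → F, |f w| ^ 2 = ∑ w, f w ^ 2 :=
      Finset.sum_congr rfl fun w _ => sq_abs _
    rw [h2] at h1
    calc (∑ w, |f w|)^2 ≤ (#(univ : Finset (Fin n → F)) : ℝ) * ∑ w, f w ^ 2 := h1
      _ = (Fintype.card F : ℝ) ^ n * ∑ w, f w ^ 2 := by
          rw [card_univ, Fintype.card_fun, Fintype.card_fin]
          push_cast
          ring
  have hrpoweq : (2:ℝ)^((n*ℓ:ℝ) - k'') = (2:ℝ) ^ (n*ℓ : ℕ) * (2:ℝ)^(-k'') := by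
    rw [← Real.rpow_natCast 2 (n*ℓ), ← Real.rpow_add (by norm_num : (0:ℝ) < 2)]
    congr 1
    push_cast
    ring
  have hsq_bound : (∑ w, |f w|)^2 ≤ (2:ℝ)^((n*ℓ:ℝ) - k'') * ((1 - (k:ℝ)/n) ^ s)^2 := by
    calc (∑ w, |f w|)^2 ≤ (Fintype.card F : ℝ) ^ n * ∑ w, f w ^ 2 := hCS
      _ ≤ (Fintype.card F : ℝ) ^ n * (((1 - (k:ℝ)/n) ^ s)^2 * (2:ℝ)^(-k'')) :=
          mul_le_mul_of_nonneg_left hsum_f2 hqn0.le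
      _ = (2:ℝ)^((n*ℓ:ℝ) - k'') * ((1 - (k:ℝ)/n) ^ s)^2 := by
          rw [hqn, hrpoweq]
          ring
  have hsqrt_eq : Real.sqrt ((2:ℝ)^((n*ℓ:ℝ) - k'') * ((1 - (k:ℝ)/n) ^ s)^2)
      = (2:ℝ)^(((n*ℓ:ℝ) - k'')/2) * (1 - (k:ℝ)/n) ^ s := by
    rw [Real.sqrt_mul (Real.rpow_nonneg (by norm_num) _), Real.sqrt_sq hεs0]
    congr 1
    rw [Real.sqrt_eq_rpow, ← Real.rpow_mul (by norm_num : (0:ℝ) ≤ 2)]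
    congr 1
    ring
  have habs : ∑ w, |f w| ≤ (2:ℝ)^(((n*ℓ:ℝ) - k'')/2) * (1 - (k:ℝ)/n) ^ s := by
    calc ∑ w, |f w| = Real.sqrt ((∑ w, |f w|)^2) := (Real.sqrt_sq habs0).symm
      _ ≤ Real.sqrt ((2:ℝ)^((n*ℓ:ℝ) - k'') * ((1 - (k:ℝ)/n) ^ s)^2) :=
          Real.sqrt_le_sqrt hsq_bound
      _ = (2:ℝ)^(((n*ℓ:ℝ) - k'')/2) * (1 - (k:ℝ)/n) ^ s := hsqrt_eq
  show SD D (fun _ : Fin n → F => u) ≤ _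
  rw [hSDeq]
  have hfinal : (2:ℝ) ^ (((n * ℓ : ℝ) - k'') / 2 - 1) * (1 - (k : ℝ) / n) ^ s
      = ((2:ℝ)^(((n*ℓ:ℝ) - k'')/2) * (1 - (k:ℝ)/n) ^ s) / 2 := by
    rw [Real.rpow_sub (by norm_num : (0:ℝ) < 2), Real.rpow_one]
    ring
  rw [hfinal]
  exact div_le_div_of_nonneg_right habs (by norm_num) |>.trans_eq rfl

end Extractor4
section EntropyGlue
open Finset

lemma exists_pos_of_sum_one {Ω : Type*} [Fintype Ω] (p : Ω → ℝ) (hp1 : ∑ x, p x = 1) :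
    ∃ x, 0 < p x := by
  by_contra h
  push_neg at h
  have h2 : ∑ x, p x ≤ 0 := Finset.sum_nonpos fun x _ => h x
  linarith

lemma iSup_pos_of_sum_one {Ω : Type*} [Fintype Ω] (p : Ω → ℝ) (hp1 : ∑ x, p x = 1) :
    0 < ⨆ x, p x := by
  obtain ⟨x, hx⟩ := exists_pos_of_sum_one p hp1
  haveI : Nonempty Ω := ⟨x⟩
  exact lt_of_lt_of_le hx (le_ciSup (Set.Finite.bddAbove (Set.finite_range p)) x)

lemma minEntropy_ge {Ω : Type*} [Fintype Ω] (p : Ω → ℝ) (hp1 : ∑ x, p x = 1) (c : ℝ)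
    (hbound : ∀ x, p x ≤ (2:ℝ)^(-c)) : c ≤ minEntropy p := by
  have hS : 0 < ⨆ x, p x := iSup_pos_of_sum_one p hp1
  haveI : Nonempty Ω := ⟨(exists_pos_of_sum_one p hp1).choose⟩
  have hSle : (⨆ x, p x) ≤ (2:ℝ)^(-c) := ciSup_le hbound
  have h2 := (Real.logb_le_iff_le_rpow (by norm_num : (1:ℝ) < 2) hS).mpr hSle
  unfold minEntropy
  linarith

lemma le_rpow_of_minEntropy {Ω : Type*} [Fintype Ω] (p : Ω → ℝ) (hp1 : ∑ x, p x = 1)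
    (c : ℝ) (h : c ≤ minEntropy p) (x : Ω) : p x ≤ (2:ℝ)^(-c) := by
  have hS : 0 < ⨆ x, p x := iSup_pos_of_sum_one p hp1
  have hlog : Real.logb 2 (⨆ x, p x) ≤ -c := by
    unfold minEntropy at h
    linarith
  have hSle : (⨆ x, p x) ≤ (2:ℝ)^(-c) :=
    (Real.logb_le_iff_le_rpow (by norm_num : (1:ℝ) < 2) hS).mp hlog
  exact le_trans (le_ciSup (Set.Finite.bddAbove (Set.finite_range p)) x) hSle

end EntropyGlue

set_option maxHeartbeats 1000000 in
/-- **The perturbed instance hides the message from a small model.**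
`Q` is a uniform `β`-bit key; the model `Z` (arbitrary, jointly distributed with `Q`)
has support of size at most `2^p`; `m` is a uniform message, and `ρ` is the random-subset
noise on `s` out of `n` coordinates.  Under the stated sampler property of `samp₂`, with
probability at least `1 - 2^(-t)` over `z ← Z`, the conditional distribution of
`(u₂, Enc(m) + Q|_{samp₂(u₂)} + ρ)` given `Z = z` is
`(η + 2^((nℓ-k'')/2-1)·(1-R)^s)`-close to `(u₂, uniform)`, where `R = k/n`. -/
theorem perturbed_instance_hides_message
    (β k ℓ n r₂ pm : ℕ) (hkn : k ≤ n) (hn : n ≤ 2 ^ ℓ) (s : ℕ) (hs : s ≤ n)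
    (t : ℝ) (ht : 0 < t) (η : ℝ) (hη : 0 ≤ η) (k'' : ℝ) (hk'' : 0 ≤ k'')
    (F : Type*) [Field F] [Fintype F] [DecidableEq F] (hF : Fintype.card F = 2 ^ ℓ)
    (a : Fin n → F) (ha : Function.Injective a)
    (toF : (Fin ℓ → ZMod 2) ≃ F)
    (samp₂ : (Fin r₂ → ZMod 2) → {S : Finset (Fin β) // S.card = n * ℓ})
    (hsamp₂ : ∀ X : (Fin β → ZMod 2) → ℝ, (∀ x, 0 ≤ X x) → (∑ x, X x = 1) →
      (β : ℝ) - pm - t ≤ minEntropy X →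
      ∃ Y : (Fin (n * ℓ) → ZMod 2) → ℝ, (∀ y, 0 ≤ Y y) ∧ (∑ y, Y y = 1) ∧
        k'' ≤ minEntropy Y ∧
        SD (fun uy : (Fin r₂ → ZMod 2) × (Fin (n * ℓ) → ZMod 2) =>
              (1 / 2 ^ r₂) *
                ∑ x, if restrict x (samp₂ uy.1).1 (samp₂ uy.1).2 = uy.2 then X x else 0)
          (fun uy => (1 / 2 ^ r₂) * Y uy.2) ≤ η)
    (B : Type*) [Fintype B]
    (p : (Fin β → ZMod 2) × B → ℝ)
    (hp0 : ∀ w, 0 ≤ p w) (hp1 : ∑ w, p w = 1)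
    (hQunif : ∀ q0 : Fin β → ZMod 2, ∑ b, p (q0, b) = 1 / 2 ^ β)
    (hsupp : ((Finset.univ : Finset B).filter (fun b => margZ p b ≠ 0)).card ≤ 2 ^ pm) :
    1 - (2 : ℝ) ^ (-t) ≤
      ∑ z ∈ (Finset.univ : Finset B).filter (fun z =>
          SD (fun uw : (Fin r₂ → ZMod 2) × (Fin n → F) =>
                (1 / 2 ^ r₂) * ∑ q0 : Fin β → ZMod 2,
                  (p (q0, z) / margZ p z) *
                    (∑ m : Fin k → F,
                      ∑ S ∈ Finset.powersetCard s (Finset.univ : Finset (Fin n)),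
                        ∑ e : Fin n → F,
                          (1 / (Fintype.card F : ℝ) ^ k) * (1 / (n.choose s : ℝ)) *
                            (1 / (Fintype.card F : ℝ) ^ n) *
                            (if (fun i => rsEnc k n a m i +
                                  vecOf ℓ n toF
                                    (restrict q0 (samp₂ uw.1).1 (samp₂ uw.1).2) i +
                                  (if i ∈ S then e i else 0)) = uw.2
                              then 1 else 0)))
              (fun _ => (1 / 2 ^ r₂) * (1 / 2 ^ (n * ℓ))) ≤
            η + (2 : ℝ) ^ (((n * ℓ : ℝ) - k'') / 2 - 1) * (1 - (k : ℝ) / n) ^ s),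
        margZ p z := by
  classical
  set thr : ℝ := (2:ℝ)^(-(pm:ℝ) - t) with hthr
  have hthr0 : 0 < thr := Real.rpow_pos_of_pos (by norm_num) _
  have hm0 : ∀ z, 0 ≤ margZ p z := fun z => Finset.sum_nonneg fun q0 _ => hp0 _
  have hmsum : ∑ z, margZ p z = 1 := by
    rw [← hp1, Fintype.sum_prod_type]
    exact Finset.sum_comm
  have hbadsum : ∑ z ∈ (univ : Finset B).filter (fun z => ¬ thr ≤ margZ p z), margZ p z
      ≤ (2:ℝ)^(-t) := by
    set S1 := (univ : Finset B).filter (fun z => ¬ thr ≤ margZ p z) with hS1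
    have hstep : ∑ z ∈ S1, margZ p z
        = ∑ z ∈ S1.filter (fun z => margZ p z ≠ 0), margZ p z :=
      (Finset.sum_filter_ne_zero S1).symm
    rw [hstep]
    set S2 := S1.filter (fun z => margZ p z ≠ 0) with hS2
    have hcard : (S2.card : ℝ) ≤ (2:ℝ)^(pm:ℕ) := by
      have hsub : S2 ⊆ (univ : Finset B).filter (fun b => margZ p b ≠ 0) := by
        intro z hz
        rw [hS2, Finset.mem_filter] at hz
        exact Finset.mem_filter.mpr ⟨Finset.mem_univ z, hz.2⟩
      have h := le_trans (Finset.card_le_card hsub) hsupp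
      exact_mod_cast h
    have hbd : ∀ z ∈ S2, margZ p z ≤ thr := by
      intro z hz
      rw [hS2, Finset.mem_filter, hS1, Finset.mem_filter] at hz
      exact le_of_lt (not_le.mp hz.1.2)
    calc ∑ z ∈ S2, margZ p z ≤ S2.card • thr := Finset.sum_le_card_nsmul S2 _ thr hbd
      _ = (S2.card : ℝ) * thr := nsmul_eq_mul _ _
      _ ≤ (2:ℝ)^(pm:ℕ) * thr := mul_le_mul_of_nonneg_right hcard hthr0.le
      _ = (2:ℝ)^(-t) := by
          rw [hthr, ← Real.rpow_natCast 2 pm, ← Real.rpow_add (by norm_num : (0:ℝ) < 2)]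
          congr 1
          ring
  have hgoodmass : 1 - (2:ℝ)^(-t)
      ≤ ∑ z ∈ (univ : Finset B).filter (fun z => thr ≤ margZ p z), margZ p z := by
    have hsplit := Finset.sum_filter_add_sum_filter_not (univ : Finset B)
      (fun z => thr ≤ margZ p z) (margZ p)
    rw [hmsum] at hsplit
    linarith
  have hmain : ∀ z, thr ≤ margZ p z →
      SD (fun uw : (Fin r₂ → ZMod 2) × (Fin n → F) =>
            (1 / 2 ^ r₂) * ∑ q0 : Fin β → ZMod 2,
              (p (q0, z) / margZ p z) *
                (∑ m : Fin k → F,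
                  ∑ S ∈ Finset.powersetCard s (Finset.univ : Finset (Fin n)),
                    ∑ e : Fin n → F,
                      (1 / (Fintype.card F : ℝ) ^ k) * (1 / (n.choose s : ℝ)) *
                        (1 / (Fintype.card F : ℝ) ^ n) *
                        (if (fun i => rsEnc k n a m i +
                              vecOf ℓ n toF
                                (restrict q0 (samp₂ uw.1).1 (samp₂ uw.1).2) i +
                              (if i ∈ S then e i else 0)) = uw.2
                          then 1 else 0)))
          (fun _ => (1 / 2 ^ r₂) * (1 / 2 ^ (n * ℓ))) ≤
        η + (2 : ℝ) ^ (((n * ℓ : ℝ) - k'') / 2 - 1) * (1 - (k : ℝ) / n) ^ s := by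
    intro z hz
    have hmz : 0 < margZ p z := lt_of_lt_of_le hthr0 hz
    set X : (Fin β → ZMod 2) → ℝ := fun q0 => p (q0, z) / margZ p z with hX
    have hX0 : ∀ x, 0 ≤ X x := fun x => div_nonneg (hp0 _) (hm0 z)
    have hX1 : ∑ x, X x = 1 := by
      rw [hX, ← Finset.sum_div]
      have hmarg : ∑ x, p (x, z) = margZ p z := rfl
      rw [hmarg, div_self hmz.ne']
    have hXbound : ∀ x, X x ≤ (2:ℝ)^(-((β:ℝ) - pm - t)) := by
      intro x
      have h1 : p (x, z) ≤ 1/2^β := by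
        rw [← hQunif x]
        exact Finset.single_le_sum (fun b _ => hp0 _) (Finset.mem_univ z)
      have h2 : X x ≤ (1/2^β) / margZ p z := div_le_div_of_nonneg_right h1 hmz.le
      have h3 : (1/2^β : ℝ) / margZ p z ≤ (1/2^β) / thr :=
        div_le_div_of_nonneg_left (by positivity) hthr0 hz
      have h4 : (1/2^β : ℝ) / thr = (2:ℝ)^(-((β:ℝ) - pm - t)) := by
        rw [hthr, one_div, ← Real.rpow_natCast 2 β,
          ← Real.rpow_neg (by norm_num : (0:ℝ) ≤ 2),
          ← Real.rpow_sub (by norm_num : (0:ℝ) < 2)]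
        congr 1
        ring
      calc X x ≤ (1/2^β : ℝ) / margZ p z := h2
        _ ≤ (1/2^β : ℝ) / thr := h3
        _ = (2:ℝ)^(-((β:ℝ) - pm - t)) := h4
    have hXme : (β : ℝ) - pm - t ≤ minEntropy X := minEntropy_ge X hX1 _ hXbound
    obtain ⟨Y, hY0, hY1, hYme, hSDAB⟩ := hsamp₂ X hX0 hX1 hXme
    have hYmax : ∀ y, Y y ≤ (2:ℝ)^(-k'') := fun y => le_rpow_of_minEntropy Y hY1 k'' hYme y
    set A : (Fin r₂ → ZMod 2) × (Fin (n * ℓ) → ZMod 2) → ℝ := fun uy =>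
      (1 / 2 ^ r₂) * ∑ x, if restrict x (samp₂ uy.1).1 (samp₂ uy.1).2 = uy.2 then X x else 0
      with hA
    set Bf : (Fin r₂ → ZMod 2) × (Fin (n * ℓ) → ZMod 2) → ℝ := fun uy =>
      (1 / 2 ^ r₂) * Y uy.2 with hBf
    have hSDAB' : SD A Bf ≤ η := hSDAB
    have hPA : (fun uw : (Fin r₂ → ZMod 2) × (Fin n → F) =>
        (1 / 2 ^ r₂ : ℝ) * ∑ q0 : Fin β → ZMod 2, X q0 *
          CH k n s ℓ a toF (restrict q0 (samp₂ uw.1).1 (samp₂ uw.1).2) uw.2)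
        = fun uw => ∑ y, A (uw.1, y) * CH k n s ℓ a toF y uw.2 := by
      funext uw
      symm
      calc ∑ y, A (uw.1, y) * CH k n s ℓ a toF y uw.2
          = ∑ y, ∑ x, (1 / 2 ^ r₂ : ℝ) *
              ((if restrict x (samp₂ uw.1).1 (samp₂ uw.1).2 = y then X x else 0) *
                CH k n s ℓ a toF y uw.2) := by
            refine Finset.sum_congr rfl fun y _ => ?_
            show ((1 / 2 ^ r₂ : ℝ) *
                ∑ x, if restrict x (samp₂ uw.1).1 (samp₂ uw.1).2 = y then X x else 0) *
                CH k n s ℓ a toF y uw.2 = _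
            rw [mul_assoc, Finset.sum_mul, Finset.mul_sum]
        _ = ∑ x, ∑ y, (1 / 2 ^ r₂ : ℝ) *
              ((if restrict x (samp₂ uw.1).1 (samp₂ uw.1).2 = y then X x else 0) *
                CH k n s ℓ a toF y uw.2) := Finset.sum_comm
        _ = ∑ x, (1 / 2 ^ r₂ : ℝ) * (X x *
              CH k n s ℓ a toF (restrict x (samp₂ uw.1).1 (samp₂ uw.1).2) uw.2) := by
            refine Finset.sum_congr rfl fun x _ => ?_
            rw [← Finset.mul_sum]
            congr 1
            have hterm : ∀ y, (if restrict x (samp₂ uw.1).1 (samp₂ uw.1).2 = y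
                  then X x else 0) * CH k n s ℓ a toF y uw.2
                = (if restrict x (samp₂ uw.1).1 (samp₂ uw.1).2 = y then
                    X x * CH k n s ℓ a toF y uw.2 else 0) := by
              intro y; split <;> simp
            rw [Finset.sum_congr rfl fun y _ => hterm y,
              Finset.sum_ite_eq univ (restrict x (samp₂ uw.1).1 (samp₂ uw.1).2)
                (fun y => X x * CH k n s ℓ a toF y uw.2), if_pos (Finset.mem_univ _)]
        _ = (1 / 2 ^ r₂ : ℝ) * ∑ x, X x *
              CH k n s ℓ a toF (restrict x (samp₂ uw.1).1 (samp₂ uw.1).2) uw.2 :=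
            (Finset.mul_sum _ _ _).symm
    have hker := SD_kernel A Bf (CH k n s ℓ a toF)
      (fun y w => CH_nonneg k n s ℓ a toF y w) (fun y => CH_sum_one hs a toF y)
    have h1 : SD (fun uw : (Fin r₂ → ZMod 2) × (Fin n → F) =>
          (1 / 2 ^ r₂ : ℝ) * ∑ q0 : Fin β → ZMod 2, X q0 *
            CH k n s ℓ a toF (restrict q0 (samp₂ uw.1).1 (samp₂ uw.1).2) uw.2)
        (fun uw => ∑ y, Bf (uw.1, y) * CH k n s ℓ a toF y uw.2) ≤ η := by
      rw [hPA]
      exact le_trans hker hSDAB'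
    have hcardU : (Fintype.card (Fin r₂ → ZMod 2) : ℝ) = 2 ^ r₂ := by
      rw [Fintype.card_fun, ZMod.card, Fintype.card_fin]
      push_cast
      ring
    have hQscale : (fun uw : (Fin r₂ → ZMod 2) × (Fin n → F) =>
          ∑ y, Bf (uw.1, y) * CH k n s ℓ a toF y uw.2)
        = fun uw => (1 / (Fintype.card (Fin r₂ → ZMod 2) : ℝ)) *
            ((fun w => ∑ y, Y y * CH k n s ℓ a toF y w) uw.2) := by
      funext uw
      rw [hcardU]
      show ∑ y, ((1 / 2 ^ r₂ : ℝ) * Y y) * CH k n s ℓ a toF y uw.2 = _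
      rw [Finset.mul_sum]
      exact Finset.sum_congr rfl fun y _ => by ring
    have hUscale : (fun _ : (Fin r₂ → ZMod 2) × (Fin n → F) =>
          (1 / 2 ^ r₂ : ℝ) * (1 / 2 ^ (n * ℓ)))
        = fun uw : (Fin r₂ → ZMod 2) × (Fin n → F) =>
            (1 / (Fintype.card (Fin r₂ → ZMod 2) : ℝ)) *
              ((fun _ : Fin n → F => (1 / 2 ^ (n * ℓ) : ℝ)) uw.2) := by
      funext uw
      rw [hcardU]
    have h2 : SD (fun uw : (Fin r₂ → ZMod 2) × (Fin n → F) =>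
          ∑ y, Bf (uw.1, y) * CH k n s ℓ a toF y uw.2)
        (fun _ => (1 / 2 ^ r₂ : ℝ) * (1 / 2 ^ (n * ℓ)))
        = SD (fun w : Fin n → F => ∑ y, Y y * CH k n s ℓ a toF y w)
            (fun _ : Fin n → F => 1 / 2 ^ (n * ℓ)) := by
      rw [hQscale, hUscale]
      exact SD_scale_pair (fun w : Fin n → F => ∑ y, Y y * CH k n s ℓ a toF y w)
        (fun _ : Fin n → F => (1 / 2 ^ (n * ℓ) : ℝ))
    have h3 := extractor_SD hkn hs hF a ha toF k'' Y hY0 hY1 hYmax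
    have hlit : (fun uw : (Fin r₂ → ZMod 2) × (Fin n → F) =>
        (1 / 2 ^ r₂ : ℝ) * ∑ q0 : Fin β → ZMod 2,
          (p (q0, z) / margZ p z) *
            (∑ m : Fin k → F,
              ∑ S ∈ Finset.powersetCard s (Finset.univ : Finset (Fin n)),
                ∑ e : Fin n → F,
                  (1 / (Fintype.card F : ℝ) ^ k) * (1 / (n.choose s : ℝ)) *
                    (1 / (Fintype.card F : ℝ) ^ n) *
                    (if (fun i => rsEnc k n a m i +
                          vecOf ℓ n toF
                            (restrict q0 (samp₂ uw.1).1 (samp₂ uw.1).2) i +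
                          (if i ∈ S then e i else 0)) = uw.2
                      then 1 else 0)))
        = (fun uw : (Fin r₂ → ZMod 2) × (Fin n → F) =>
            (1 / 2 ^ r₂ : ℝ) * ∑ q0 : Fin β → ZMod 2, X q0 *
              CH k n s ℓ a toF (restrict q0 (samp₂ uw.1).1 (samp₂ uw.1).2) uw.2) := rfl
    rw [hlit]
    refine le_trans (SD_triangle _ (fun uw : (Fin r₂ → ZMod 2) × (Fin n → F) =>
        ∑ y, Bf (uw.1, y) * CH k n s ℓ a toF y uw.2) _) ?_
    refine add_le_add h1 ?_
    rw [h2]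
    exact h3
  have hsub : (univ : Finset B).filter (fun z => thr ≤ margZ p z)
      ⊆ (univ : Finset B).filter (fun z =>
          SD (fun uw : (Fin r₂ → ZMod 2) × (Fin n → F) =>
                (1 / 2 ^ r₂) * ∑ q0 : Fin β → ZMod 2,
                  (p (q0, z) / margZ p z) *
                    (∑ m : Fin k → F,
                      ∑ S ∈ Finset.powersetCard s (Finset.univ : Finset (Fin n)),
                        ∑ e : Fin n → F,
                          (1 / (Fintype.card F : ℝ) ^ k) * (1 / (n.choose s : ℝ)) *
                            (1 / (Fintype.card F : ℝ) ^ n) *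
                            (if (fun i => rsEnc k n a m i +
                                  vecOf ℓ n toF
                                    (restrict q0 (samp₂ uw.1).1 (samp₂ uw.1).2) i +
                                  (if i ∈ S then e i else 0)) = uw.2
                              then 1 else 0)))
              (fun _ => (1 / 2 ^ r₂) * (1 / 2 ^ (n * ℓ))) ≤
            η + (2 : ℝ) ^ (((n * ℓ : ℝ) - k'') / 2 - 1) * (1 - (k : ℝ) / n) ^ s) := by
    intro z hz
    rw [Finset.mem_filter] at hz ⊢
    exact ⟨hz.1, hmain z hz.2⟩
  calc 1 - (2:ℝ)^(-t)
      ≤ ∑ z ∈ (univ : Finset B).filter (fun z => thr ≤ margZ p z), margZ p z := hgoodmass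
    _ ≤ _ := Finset.sum_le_sum_of_subset_of_nonneg hsub fun z _ _ => hm0 z
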